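/- arXiv:0708.1071 — 2 statements merged into one kernel-verified Lean document; each statement's English description precedes it below -/
import Mathlib

section
/- For q > 1, the class C_q is empty: there is no cdf F on [0, ∞) with F(0) = 0, finite positive mean μ, and F not identically 0 on (0,∞), such that μ⁻¹ ∫₀ˣ (1 - F(u)) du = F(qx) for all x ≥ 0. -/
open MeasureTheory Real Set Filter

/-- For `q > 1` the class `C_q` is empty: no cdf `F` on `[0,∞)` with `F 0 = 0`,
finite positive mean, not identically zero on `(0,∞)`, satisfies
`μ⁻¹ ∫₀ˣ (1 - F) = F (q x)` for all `x ≥ 0`. -/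
theorem Cq_empty_of_one_lt (q : ℝ) (hq : 1 < q) :
    ¬ ∃ (F : ℝ → ℝ) (μ : ℝ),
      MonotoneOn F (Ici 0) ∧ F 0 = 0 ∧
      (∀ x, 0 ≤ x → 0 ≤ F x ∧ F x ≤ 1) ∧
      Tendsto F atTop (nhds 1) ∧
      IntegrableOn (fun u => 1 - F u) (Ioi 0) ∧
      μ = (∫ u in Ioi (0:ℝ), (1 - F u)) ∧ 0 < μ ∧
      (∃ x, 0 < x ∧ 0 < F x) ∧
      (∀ x : ℝ, 0 ≤ x → μ⁻¹ * ∫ u in (0:ℝ)..x, (1 - F u) = F (q * x)) := by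
  rintro ⟨F, μ, hmono, hF0, hFb, htop, hint, hμdef, hμpos, -, heq⟩
  have hqpos : (0:ℝ) < q := lt_trans one_pos hq
  have hq1 : (0:ℝ) < q - 1 := by linarith
  have hnn : ∀ u : ℝ, 0 ≤ u → 0 ≤ 1 - F u := fun u hu => by
    have := (hFb u hu).2; linarith
  -- equation in Ioc form
  have heq' : ∀ x : ℝ, 0 ≤ x → (∫ u in Ioc (0:ℝ) x, (1 - F u)) = μ * F (q * x) := by
    intro x hx
    have h := heq x hx
    rw [intervalIntegral.integral_of_le hx] at h
    rw [inv_mul_eq_div, div_eq_iff hμpos.ne'] at h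
    rw [h]; ring
  -- split of the total mean
  have hsplit : ∀ x : ℝ, 0 < x →
      (∫ u in Ioc (0:ℝ) x, (1 - F u)) + (∫ u in Ioi x, (1 - F u)) = μ := by
    intro x hx
    rw [hμdef, ← MeasureTheory.setIntegral_union (Ioc_disjoint_Ioi le_rfl)
      measurableSet_Ioi (hint.mono_set Ioc_subset_Ioi_self)
      (hint.mono_set (Ioi_subset_Ioi hx.le)), Ioc_union_Ioi_eq_Ioi hx.le]
  have htail : ∀ x : ℝ, 0 < x →
      μ * (1 - F (q * x)) = ∫ u in Ioi x, (1 - F u) := by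
    intro x hx
    have h1 := heq' x hx.le
    have h2 := hsplit x hx
    nlinarith [h1, h2]
  -- the set where F < 1
  set S : Set ℝ := {y : ℝ | 0 ≤ y ∧ F y < 1} with hS
  -- S contains q*(μ/2)
  have hhalf : F (q * (μ / 2)) < 1 := by
    have h1 := heq' (μ / 2) (by linarith)
    have hle : (∫ u in Ioc (0:ℝ) (μ/2), (1 - F u)) ≤ ∫ u in Ioc (0:ℝ) (μ/2), (1:ℝ) := by
      apply setIntegral_mono_on (hint.mono_set Ioc_subset_Ioi_self)
        (integrableOn_const measure_Ioc_lt_top.ne)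
        measurableSet_Ioc
      intro u hu
      have := (hFb u (le_of_lt hu.1)).1; linarith
    rw [setIntegral_const, smul_eq_mul, mul_one, measureReal_def, Real.volume_Ioc] at hle
    have hvol : (ENNReal.ofReal (μ/2 - 0)).toReal ≤ μ/2 := by
      rw [ENNReal.toReal_ofReal (by linarith)]; linarith
    nlinarith [h1, hle, hvol]
  have hmemS : q * (μ / 2) ∈ S := ⟨by positivity, hhalf⟩
  -- S is bounded above
  have hub : ∀ y ∈ S, y ≤ q * μ / (q - 1) := by
    rintro y ⟨hy0, hy1⟩
    by_contra hcon
    push_neg at hcon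
    set x := y / q with hxdef
    have hx0 : 0 < x := by
      apply div_pos _ hqpos
      have : 0 < q * μ / (q - 1) := by positivity
      linarith
    have hyx : q * x = y := by rw [hxdef, mul_comm, div_mul_cancel₀ y hqpos.ne']
    have hμx : μ < (q - 1) * x := by
      rw [div_lt_iff₀ hq1] at hcon
      rw [hxdef, show (q - 1) * (y / q) = ((q - 1) * y) / q from by ring,
        lt_div_iff₀ hqpos]
      nlinarith
    set t := 1 - F (q * x) with ht
    have ht0 : 0 ≤ t := by
      rw [ht, hyx]; exact hnn y hy0
    have h1 : μ * t = ∫ u in Ioi x, (1 - F u) := htail x hx0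
    have h2 : (∫ u in Ioc x (q * x), (1 - F u)) ≤ ∫ u in Ioi x, (1 - F u) := by
      apply setIntegral_mono_set (hint.mono_set (Ioi_subset_Ioi hx0.le))
      · filter_upwards [ae_restrict_mem measurableSet_Ioi] with u hu
        exact hnn u (le_of_lt (lt_trans hx0 hu))
      · exact HasSubset.Subset.eventuallyLE Ioc_subset_Ioi_self
    have h3 : (q * x - x) * t ≤ ∫ u in Ioc x (q * x), (1 - F u) := by
      have : (∫ u in Ioc x (q * x), (t : ℝ)) ≤ ∫ u in Ioc x (q * x), (1 - F u) := by
        apply setIntegral_mono_on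
          (integrableOn_const measure_Ioc_lt_top.ne)
          (hint.mono_set (fun u hu => lt_trans hx0 hu.1))
          measurableSet_Ioc
        intro u hu
        have hFle : F u ≤ F (q * x) := hmono (mem_Ici.mpr (le_of_lt (lt_trans hx0 hu.1)))
          (mem_Ici.mpr (by positivity)) hu.2
        rw [ht]; linarith
      rw [setIntegral_const, smul_eq_mul, measureReal_def, Real.volume_Ioc,
        ENNReal.toReal_ofReal (show (0:ℝ) ≤ q * x - x from by nlinarith)] at this
      exact this
    have hle : (q - 1) * x * t ≤ μ * t := by
      have : (q - 1) * x * t = (q * x - x) * t := by ring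
      rw [this, h1]; exact le_trans h3 h2
    have ht00 : t = 0 := by nlinarith
    rw [hyx] at ht
    have : F y = 1 := by linarith
    linarith
  have hne : S.Nonempty := ⟨_, hmemS⟩
  have hbdd : BddAbove S := ⟨q * μ / (q - 1), hub⟩
  set b := sSup S with hb
  have hb0 : 0 < b := lt_of_lt_of_le (by positivity) (le_csSup hbdd hmemS)
  obtain ⟨w, hwS, hw⟩ := exists_lt_of_lt_csSup hne (div_lt_self hb0 hq)
  set x := (b / q + w) / 2 with hx
  have hbq0 : 0 < b / q := div_pos hb0 hqpos
  have hx0 : 0 < x := by rw [hx]; linarith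
  have hxw : x < w := by rw [hx]; linarith
  have hqxb : b < q * x := by
    have hqw : b < q * w := by
      rw [div_lt_iff₀ hqpos] at hw; linarith
    rw [hx]
    have : q * ((b / q + w) / 2) = (q * (b / q) + q * w) / 2 := by ring
    rw [this, mul_div_cancel₀ _ hqpos.ne']
    linarith
  have hqxS : q * x ∉ S := fun h => absurd (le_csSup hbdd h) (not_le.2 hqxb)
  have hFqx : F (q * x) = 1 := by
    have h1 : ¬ F (q * x) < 1 := fun h => hqxS ⟨by positivity, h⟩
    have h2 := (hFb (q * x) (by positivity)).2
    linarith
  have htail0 : (∫ u in Ioi x, (1 - F u)) = 0 := by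
    have := htail x hx0
    rw [hFqx] at this
    simpa using this.symm
  -- but the tail integral is positive
  have hFw : F w < 1 := hwS.2
  have hw0 : 0 ≤ w := hwS.1
  have h2 : (∫ u in Ioc x w, (1 - F u)) ≤ ∫ u in Ioi x, (1 - F u) := by
    apply setIntegral_mono_set (hint.mono_set (Ioi_subset_Ioi hx0.le))
    · filter_upwards [ae_restrict_mem measurableSet_Ioi] with u hu
      exact hnn u (le_of_lt (lt_trans hx0 hu))
    · exact HasSubset.Subset.eventuallyLE Ioc_subset_Ioi_self
  have h3 : (w - x) * (1 - F w) ≤ ∫ u in Ioc x w, (1 - F u) := by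
    have : (∫ u in Ioc x w, (1 - F w : ℝ)) ≤ ∫ u in Ioc x w, (1 - F u) := by
      apply setIntegral_mono_on
        (integrableOn_const measure_Ioc_lt_top.ne)
        (hint.mono_set (fun u hu => lt_trans hx0 hu.1))
        measurableSet_Ioc
      intro u hu
      have hFle : F u ≤ F w := hmono (mem_Ici.mpr (le_of_lt (lt_trans hx0 hu.1)))
        (mem_Ici.mpr hw0) hu.2
      linarith
    rw [setIntegral_const, smul_eq_mul, measureReal_def, Real.volume_Ioc,
      ENNReal.toReal_ofReal (show (0:ℝ) ≤ w - x from by linarith)] at this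
    linarith
  nlinarith [h2, h3, htail0, hxw, hFw]
end

section
/- EM monotonicity for the Poisson model: with L(λ) = Σ_d [ n_d log(Σ_b λ_b p_{bd}) − Σ_b λ_b p_{bd} ] and λ' the EM update of λ, one has L(λ') ≥ L(λ), assuming all λ_b > 0, Σ_d p_{bd} = 1 for all b, and Σ_b λ_b p_{bd} > 0 for all d with n_d > 0. -/
open Real Finset

lemma em_log_ineq {x y : ℝ} (hx : 0 ≤ x) (hy : 0 < y) : x - y ≤ x * Real.log (x / y) := by
  rcases eq_or_lt_of_le hx with h | h
  · rw [← h]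
    simp
    linarith
  · have h1 : Real.log (y / x) ≤ y / x - 1 := Real.log_le_sub_one_of_pos (by positivity)
    have h2 : Real.log (y / x) = - Real.log (x / y) := by
      rw [← Real.log_inv]
      congr 1
      field_simp
    rw [h2] at h1
    have h3 : 1 - y / x ≤ Real.log (x / y) := by linarith
    calc x - y = x * (1 - y / x) := by field_simp
    _ ≤ x * Real.log (x / y) := mul_le_mul_of_nonneg_left h3 h.le

lemma em_jensen_log {B : Type*} [Fintype B] (w x : B → ℝ) (hw : ∀ b, 0 ≤ w b)
    (hw1 : ∑ b, w b = 1) (hx : ∀ b, w b ≠ 0 → 0 < x b) :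
    ∑ b, w b * Real.log (x b) ≤ Real.log (∑ b, w b * x b) := by
  classical
  set t := Finset.univ.filter (fun b => w b ≠ 0) with ht
  have hsub : ∀ f : B → ℝ, ∑ b ∈ t, w b * f b = ∑ b, w b * f b := by
    intro f
    apply Finset.sum_subset (Finset.subset_univ _)
    intro b _ hb
    simp only [ht, Finset.mem_filter, Finset.mem_univ, true_and, not_not] at hb
    simp [hb]
  have h1 : ∑ b ∈ t, w b = 1 := by
    rw [← hw1]
    apply Finset.sum_subset (Finset.subset_univ _)
    intro b _ hb
    simp only [ht, Finset.mem_filter, Finset.mem_univ, true_and, not_not] at hb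
    exact hb
  have hj := (strictConcaveOn_log_Ioi.concaveOn).le_map_sum
    (t := t) (w := w) (p := x) (fun b _ => hw b) h1
    (fun b hb => by
      simp only [ht, Finset.mem_filter, Finset.mem_univ, true_and] at hb
      exact Set.mem_Ioi.mpr (hx b hb))
  simp only [smul_eq_mul] at hj
  rw [hsub, hsub] at hj
  exact hj

/-- EM monotonicity for the Poisson model: one EM step does not decrease the
log-likelihood `L(λ) = ∑ d, (n d * log (∑ b, λ b * p b d) − ∑ b, λ b * p b d)`. -/
theorem em_update_increases_loglikelihood (B D : Type*) [Fintype B] [Fintype D]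
    (p : B → D → ℝ) (hp : ∀ b d, 0 ≤ p b d) (hpsum : ∀ b, ∑ d, p b d = 1)
    (n : D → ℝ) (hn : ∀ d, 0 ≤ n d)
    (l : B → ℝ) (hl : ∀ b, 0 < l b)
    (hpos : ∀ d, 0 < n d → 0 < ∑ b, l b * p b d)
    (l' : B → ℝ)
    (hl' : ∀ b, l' b = l b * ∑ d, p b d * n d / (∑ b', l b' * p b' d)) :
    (∑ d, (n d * Real.log (∑ b, l b * p b d) - ∑ b, l b * p b d))
      ≤ ∑ d, (n d * Real.log (∑ b, l' b * p b d) - ∑ b, l' b * p b d) := by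
  classical
  have hSnn : ∀ d, 0 ≤ ∑ b, l b * p b d :=
    fun d => Finset.sum_nonneg fun b _ => mul_nonneg (hl b).le (hp b d)
  have hl'nn : ∀ b, 0 ≤ l' b := by
    intro b
    rw [hl' b]
    exact mul_nonneg (hl b).le
      (Finset.sum_nonneg fun d _ => div_nonneg (mul_nonneg (hp b d) (hn d)) (hSnn d))
  have hl'pos : ∀ b d, 0 < p b d → 0 < n d → 0 < l' b := by
    intro b d hpbd hnd
    rw [hl' b]
    refine mul_pos (hl b) ?_
    calc (0:ℝ) < p b d * n d / (∑ b', l b' * p b' d) :=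
          div_pos (mul_pos hpbd hnd) (hpos d hnd)
    _ ≤ ∑ d', p b d' * n d' / (∑ b', l b' * p b' d') :=
          Finset.single_le_sum
            (fun d' _ => div_nonneg (mul_nonneg (hp b d') (hn d')) (hSnn d'))
            (Finset.mem_univ d)
  -- total mass identities
  have hmass : ∀ m : B → ℝ, ∑ d, ∑ b, m b * p b d = ∑ b, m b := by
    intro m
    rw [Finset.sum_comm]
    simp only [← Finset.mul_sum, hpsum, mul_one]
  -- reduce to the key inequality
  rw [Finset.sum_sub_distrib, Finset.sum_sub_distrib, hmass l, hmass l']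
  have key : ∑ b, l' b - ∑ b, l b ≤
      ∑ d, n d * Real.log (∑ b, l' b * p b d) - ∑ d, n d * Real.log (∑ b, l b * p b d) := by
    have partII : ∑ b, l' b - ∑ b, l b ≤ ∑ b, l' b * Real.log (l' b / l b) := by
      rw [← Finset.sum_sub_distrib]
      exact Finset.sum_le_sum fun b _ => em_log_ineq (hl'nn b) (hl b)
    have partI : ∑ b, l' b * Real.log (l' b / l b) ≤
        ∑ d, n d * Real.log (∑ b, l' b * p b d) - ∑ d, n d * Real.log (∑ b, l b * p b d) := by
      have hrw : ∑ d, n d * ∑ b, (l b * p b d / (∑ b', l b' * p b' d)) * Real.log (l' b / l b)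
          = ∑ b, l' b * Real.log (l' b / l b) := by
        simp only [Finset.mul_sum]
        rw [Finset.sum_comm]
        refine Finset.sum_congr rfl fun b _ => ?_
        rw [hl' b, Finset.mul_sum, Finset.sum_mul]
        refine Finset.sum_congr rfl fun d _ => ?_
        ring
      rw [← hrw, ← Finset.sum_sub_distrib]
      refine Finset.sum_le_sum fun d _ => ?_
      rcases eq_or_lt_of_le (hn d) with hnd | hnd
      · rw [← hnd]
        simp
      · have hSd : 0 < ∑ b, l b * p b d := hpos d hnd
        -- some b with positive contribution
        obtain ⟨b0, hb0⟩ : ∃ b, 0 < l b * p b d := by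
          by_contra hcon
          push_neg at hcon
          have : ∑ b, l b * p b d ≤ 0 :=
            Finset.sum_nonpos fun b _ => hcon b
          linarith
        have hpb0 : 0 < p b0 d := by
          rcases eq_or_lt_of_le (hp b0 d) with h | h
          · rw [← h] at hb0; simp at hb0
          · exact h
        have hS'd : 0 < ∑ b, l' b * p b d := by
          calc (0:ℝ) < l' b0 * p b0 d := mul_pos (hl'pos b0 d hpb0 hnd) hpb0
          _ ≤ ∑ b, l' b * p b d :=
            Finset.single_le_sum (fun b _ => mul_nonneg (hl'nn b) (hp b d))
              (Finset.mem_univ b0)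
        have hjensen := em_jensen_log
          (w := fun b => l b * p b d / (∑ b', l b' * p b' d))
          (x := fun b => l' b / l b)
          (fun b => div_nonneg (mul_nonneg (hl b).le (hp b d)) hSd.le)
          (by rw [← Finset.sum_div]; exact div_self hSd.ne')
          (fun b hwb => by
            have hpbd : 0 < p b d := by
              rcases eq_or_lt_of_le (hp b d) with h | h
              · exact absurd (by simp [← h]) hwb
              · exact h
            exact div_pos (hl'pos b d hpbd hnd) (hl b))
        have hsx : ∑ b, (l b * p b d / (∑ b', l b' * p b' d)) * (l' b / l b)
            = (∑ b, l' b * p b d) / (∑ b', l b' * p b' d) := by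
          rw [Finset.sum_div]
          refine Finset.sum_congr rfl fun b _ => ?_
          field_simp [(hl b).ne', hSd.ne']
        rw [hsx] at hjensen
        rw [Real.log_div hS'd.ne' hSd.ne'] at hjensen
        calc n d * ∑ b, (l b * p b d / (∑ b', l b' * p b' d)) * Real.log (l' b / l b)
            ≤ n d * (Real.log (∑ b, l' b * p b d) - Real.log (∑ b, l b * p b d)) :=
              mul_le_mul_of_nonneg_left hjensen hnd.le
        _ = n d * Real.log (∑ b, l' b * p b d) - n d * Real.log (∑ b, l b * p b d) := by ring
    linarith
  linarith
end
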